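/- For the sun-star extension of the DDE shift semigroup, the phi-functions are explicit: for h > 0 ≤ τ and k ≥ 1, the weak-star integral ∫₀^h 𝒯₀(h−s)(s^{k−1}/(k−1)!; 0) ds equals the pair (h^k/k!; θ ↦ (max(0, h+θ))^k / k!) for θ ∈ [−τ,0]. -/

import Mathlib

open Real intervalIntegral

lemma aux_pow_int (m : ℕ) (a : ℝ) :
    (∫ s in (0:ℝ)..a, s ^ m / (Nat.factorial m : ℝ))
      = a ^ (m + 1) / (Nat.factorial (m + 1) : ℝ) := by
  have hm : (Nat.factorial m : ℝ) ≠ 0 := by positivity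
  simp only [div_eq_mul_inv, integral_mul_const, integral_pow]
  rw [Nat.factorial_succ]
  push_cast
  field_simp
  simp

/-- For the sun-star extension of the DDE shift semigroup, the weak-star integral
`∫₀^h 𝒯₀(h−s)(s^{k−1}/(k−1)!; 0) ds` equals the pair
`(h^k/k!; θ ↦ max(0,h+θ)^k/k!)` on `[−τ,0]`. -/
theorem stmt_10 (τ h : ℝ) (hτ : 0 < τ) (hh : 0 < h) (hhτ : h ≤ τ)
    (k : ℕ) (hk : 1 ≤ k)
    (T : ℝ → ℝ × (ℝ → ℝ) → ℝ × (ℝ → ℝ))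
    (hT1 : ∀ t p, (T t p).1 = p.1)
    (hT2 : ∀ t p θ, (T t p).2 θ = if -t ≤ θ then p.1 else p.2 (t + θ)) :
    (∫ s in (0:ℝ)..h,
        (T (h - s) (s ^ (k - 1) / (Nat.factorial (k - 1) : ℝ), fun _ => 0)).1)
      = h ^ k / (Nat.factorial k : ℝ) ∧
    ∀ θ ∈ Set.Icc (-τ) (0:ℝ),
      (∫ s in (0:ℝ)..h,
          (T (h - s) (s ^ (k - 1) / (Nat.factorial (k - 1) : ℝ), fun _ => 0)).2 θ)
        = (max 0 (h + θ)) ^ k / (Nat.factorial k : ℝ) := by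
  obtain ⟨m, rfl⟩ : ∃ m, k = m + 1 := ⟨k - 1, (Nat.succ_pred_eq_of_pos hk).symm⟩
  simp only [Nat.add_sub_cancel]
  constructor
  · simp only [hT1]
    exact aux_pow_int m h
  · intro θ hθ
    obtain ⟨hθ1, hθ2⟩ := hθ
    simp only [hT2]
    have hcond : ∀ s : ℝ, (-(h - s) ≤ θ) ↔ s ≤ h + θ := by
      intro s; constructor <;> intro hs <;> linarith
    rcases le_or_gt 0 (h + θ) with hc | hc
    · have hmem : h + θ ∈ Set.Icc (0:ℝ) h := ⟨hc, by linarith⟩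
      have : (fun s : ℝ => if -(h - s) ≤ θ then s ^ m / (Nat.factorial m : ℝ) else 0)
          = fun s : ℝ => Set.indicator {x : ℝ | x ≤ h + θ}
              (fun s => s ^ m / (Nat.factorial m : ℝ)) s := by
        funext s
        simp only [Set.indicator_apply, Set.mem_setOf_eq, hcond s]
      calc (∫ s in (0:ℝ)..h, if -(h - s) ≤ θ then s ^ m / (Nat.factorial m : ℝ) else 0)
          = ∫ s in (0:ℝ)..h, Set.indicator {x : ℝ | x ≤ h + θ}
              (fun s => s ^ m / (Nat.factorial m : ℝ)) s := by rw [this]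
        _ = ∫ s in (0:ℝ)..(h + θ), s ^ m / (Nat.factorial m : ℝ) :=
            intervalIntegral.integral_indicator hmem
        _ = (h + θ) ^ (m + 1) / (Nat.factorial (m + 1) : ℝ) := aux_pow_int m (h + θ)
        _ = (max 0 (h + θ)) ^ (m + 1) / (Nat.factorial (m + 1) : ℝ) := by
            rw [max_eq_right hc]
    · have : (∫ s in (0:ℝ)..h, if -(h - s) ≤ θ then s ^ m / (Nat.factorial m : ℝ) else 0)
          = ∫ s in (0:ℝ)..h, (0:ℝ) := by
        apply intervalIntegral.integral_congr_ae
        filter_upwards with s hs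
        rw [Set.uIoc_of_le hh.le] at hs
        exact if_neg (fun hcon => by have := (hcond s).1 hcon; linarith [hs.1])
      rw [this, intervalIntegral.integral_zero, max_eq_left hc.le]
      simp
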